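/- arXiv:1303.7295 — 3 statements merged into one kernel-verified Lean document; each statement's English description precedes it below -/
import Mathlib

section
/- For every ε₁ ∈ (0,1) there exist constants ε₂ > 0 and ε₂' > 0, depending only on ε₁, such that for all positive integers m₁ and m₂ the following holds: if h_A ∈ ℝ^{m₁} and h_B ∈ ℝ^{m₂} are independent random vectors with i.i.d. standard normal entries, then P( √(‖h_A‖₂² + ‖(h_B)₊‖₂²) > (1−ε₁)√(m₁ + m₂/2) ) ≥ 1 − e^{−ε₂ (m₁ + m₂/2)} and P( √(‖h_A‖₂² + ‖(h_B)₊‖₂²) < (1+ε₁)√(m₁ + m₂/2) ) ≥ 1 − e^{−ε₂' (m₁ + m₂/2)}. -/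
open MeasureTheory ProbabilityTheory

/-- Law of a random vector in `ℝ^k` with i.i.d. standard normal entries. -/
noncomputable def gaussVec (k : ℕ) : Measure (Fin k → ℝ) :=
  Measure.pi fun _ => gaussianReal 0 1

open Real
open scoped ENNReal NNReal

instance gaussVec_isProb (k : ℕ) : IsProbabilityMeasure (gaussVec k) := by
  unfold gaussVec; infer_instance



lemma sqrt_aux1 (t : ℝ) (ht : 0 ≤ t) : (Real.sqrt (1+2*t))⁻¹ ≤ 1 - t + 1.5*t^2 := by
  have h1 : (0:ℝ) < 1 + 2*t := by linarith
  have hs : Real.sqrt (1+2*t) > 0 := Real.sqrt_pos.mpr h1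
  have hsq : Real.sqrt (1+2*t) ^ 2 = 1 + 2*t := Real.sq_sqrt h1.le
  have hp : (0:ℝ) < 1 - t + 1.5*t^2 := by nlinarith [sq_nonneg (t - 1/3)]
  rw [inv_le_iff_one_le_mul₀ hs]
  have h2 : ((1 - t + 1.5*t^2) * Real.sqrt (1+2*t))^2 = (1 - t + 1.5*t^2)^2 * (1+2*t) := by
    rw [mul_pow, hsq]
  have h3 : 1 ≤ ((1 - t + 1.5*t^2) * Real.sqrt (1+2*t))^2 := by
    rw [h2]; nlinarith [sq_nonneg t, mul_nonneg (mul_nonneg ht ht) ht,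
      mul_nonneg (mul_nonneg (mul_nonneg ht ht) ht) ht,
      mul_nonneg (mul_nonneg (mul_nonneg (mul_nonneg ht ht) ht) ht) ht]
  nlinarith [mul_pos hp hs, h3]

lemma sqrt_aux2 (u : ℝ) (h0 : 0 ≤ u) (h4 : u ≤ 1/4) : (Real.sqrt (1-2*u))⁻¹ ≤ 1 + u + 4*u^2 := by
  have h1 : (0:ℝ) < 1 - 2*u := by linarith
  have hs : Real.sqrt (1-2*u) > 0 := Real.sqrt_pos.mpr h1
  have hsq : Real.sqrt (1-2*u) ^ 2 = 1 - 2*u := Real.sq_sqrt h1.le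
  have hp : (0:ℝ) < 1 + u + 4*u^2 := by positivity
  rw [inv_le_iff_one_le_mul₀ hs]
  have h2 : ((1 + u + 4*u^2) * Real.sqrt (1-2*u))^2 = (1 + u + 4*u^2)^2 * (1-2*u) := by
    rw [mul_pow, hsq]
  have h3 : 1 ≤ ((1 + u + 4*u^2) * Real.sqrt (1-2*u))^2 := by
    rw [h2]; nlinarith [sq_nonneg u, mul_nonneg (mul_nonneg h0 h0) h0,
      mul_nonneg (mul_nonneg (mul_nonneg h0 h0) h0) h0,
      mul_nonneg (mul_nonneg (mul_nonneg (mul_nonneg h0 h0) h0) h0) h0]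
  nlinarith [mul_pos hp hs, h3]

lemma gauss_eq_withDensity : gaussianReal 0 1 =
    (volume : Measure ℝ).withDensity fun x => ((gaussianPDFReal 0 1 x).toNNReal : ℝ≥0∞) := by
  rw [gaussianReal_of_var_ne_zero _ one_ne_zero]
  rfl

lemma gauss_integral (f : ℝ → ℝ) :
    ∫ x, f x ∂(gaussianReal 0 1) = ∫ x, gaussianPDFReal 0 1 x * f x := by
  rw [gauss_eq_withDensity, integral_withDensity_eq_integral_smul
    ((measurable_gaussianPDFReal 0 1).real_toNNReal)]
  congr 1; ext x
  simp [NNReal.smul_def, Real.coe_toNNReal _ (gaussianPDFReal_nonneg 0 1 x)]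

lemma gauss_integrable_iff (f : ℝ → ℝ) :
    Integrable f (gaussianReal 0 1) ↔ Integrable (fun x => gaussianPDFReal 0 1 x * f x) volume := by
  rw [gauss_eq_withDensity, integrable_withDensity_iff_integrable_coe_smul
    ((measurable_gaussianPDFReal 0 1).real_toNNReal)]
  constructor <;> intro h <;> refine h.congr (ae_of_all _ fun x => ?_) <;>
    simp [NNReal.smul_def, Real.coe_toNNReal _ (gaussianPDFReal_nonneg 0 1 x)]

lemma pdf_eq (x : ℝ) : gaussianPDFReal 0 1 x = (Real.sqrt (2*π))⁻¹ * rexp (-(1/2) * x^2) := by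
  simp only [gaussianPDFReal, NNReal.coe_one, mul_one, sub_zero]
  congr 1
  ring

lemma pdf_mul (c x : ℝ) :
    gaussianPDFReal 0 1 x * rexp (c * x^2) = (Real.sqrt (2*π))⁻¹ * rexp (-(1/2-c) * x^2) := by
  rw [pdf_eq, mul_assoc, ← Real.exp_add]
  ring_nf

lemma intA {c : ℝ} (hc : c < 1/2) : Integrable (fun x => rexp (c * x^2)) (gaussianReal 0 1) := by
  rw [gauss_integrable_iff]
  have : (fun x => gaussianPDFReal 0 1 x * rexp (c * x^2))
      = fun x => (Real.sqrt (2*π))⁻¹ * rexp (-(1/2-c) * x^2) := funext (pdf_mul c)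
  rw [this]
  exact (integrable_exp_neg_mul_sq (by linarith)).const_mul _

lemma sqrt_alg {b : ℝ} (hb : 0 < b) : (Real.sqrt (2*π))⁻¹ * Real.sqrt (π/b) = (Real.sqrt (2*b))⁻¹ := by
  have hπ : (0:ℝ) < π := pi_pos
  rw [Real.sqrt_div hπ.le, Real.sqrt_mul (by norm_num : (0:ℝ) ≤ 2) π,
    Real.sqrt_mul (by norm_num : (0:ℝ) ≤ 2) b]
  have h1 : Real.sqrt π > 0 := Real.sqrt_pos.mpr hπ
  have h2 : Real.sqrt b > 0 := Real.sqrt_pos.mpr hb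
  have h3 : Real.sqrt 2 > 0 := Real.sqrt_pos.mpr (by norm_num)
  field_simp

lemma IA {c : ℝ} (hc : c < 1/2) :
    ∫ x, rexp (c * x^2) ∂(gaussianReal 0 1) = (Real.sqrt (1-2*c))⁻¹ := by
  rw [gauss_integral]
  have : (fun x => gaussianPDFReal 0 1 x * rexp (c * x^2))
      = fun x => (Real.sqrt (2*π))⁻¹ * rexp (-(1/2-c) * x^2) := funext (pdf_mul c)
  rw [this, MeasureTheory.integral_const_mul, integral_gaussian, sqrt_alg (by linarith : (0:ℝ) < 1/2 - c)]
  rw [show (1:ℝ)-2*c = 2*(1/2-c) by ring]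

lemma gauss_Iic (b : ℝ) :
    ∫ x in Set.Iic (0:ℝ), rexp (-b*x^2) = ∫ x in Set.Ioi (0:ℝ), rexp (-b*x^2) := by
  have := integral_comp_neg_Iic (0:ℝ) (fun y => rexp (-b*y^2))
  simpa using this

lemma fB_eqOn1 (c : ℝ) : Set.EqOn (fun x => gaussianPDFReal 0 1 x * rexp (c * (max x 0)^2))
    (gaussianPDFReal 0 1) (Set.Iic 0) := by
  intro x hx
  simp only [Set.mem_Iic] at hx
  simp [max_eq_right hx]

lemma fB_eqOn2 (c : ℝ) : Set.EqOn (fun x => gaussianPDFReal 0 1 x * rexp (c * (max x 0)^2))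
    (fun x => (Real.sqrt (2*π))⁻¹ * rexp (-(1/2-c) * x^2)) (Set.Ioi 0) := by
  intro x hx
  simp only [Set.mem_Ioi] at hx
  simp only [max_eq_left hx.le]
  exact pdf_mul c x

lemma hIic (c : ℝ) : IntegrableOn (fun x => gaussianPDFReal 0 1 x * rexp (c * (max x 0)^2))
    (Set.Iic 0) volume :=
  ((integrable_gaussianPDFReal 0 1).integrableOn).congr_fun (fB_eqOn1 c).symm measurableSet_Iic

lemma hIoi {c : ℝ} (hc : c < 1/2) :
    IntegrableOn (fun x => gaussianPDFReal 0 1 x * rexp (c * (max x 0)^2)) (Set.Ioi 0) volume :=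
  (((integrable_exp_neg_mul_sq (by linarith : (0:ℝ) < 1/2-c)).const_mul _).integrableOn).congr_fun
    (fB_eqOn2 c).symm measurableSet_Ioi

lemma intB {c : ℝ} (hc : c < 1/2) :
    Integrable (fun x => rexp (c * (max x 0)^2)) (gaussianReal 0 1) := by
  rw [gauss_integrable_iff]
  rw [← integrableOn_univ, ← Set.Iic_union_Ioi (a := (0:ℝ))]
  exact (hIic c).union (hIoi hc)

lemma IB {c : ℝ} (hc : c < 1/2) :
    ∫ x, rexp (c * (max x 0)^2) ∂(gaussianReal 0 1) = 1/2 + (Real.sqrt (1-2*c))⁻¹/2 := by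
  rw [gauss_integral, ← intervalIntegral.integral_Iic_add_Ioi (hIic c) (hIoi hc),
    setIntegral_congr_fun measurableSet_Iic (fB_eqOn1 c),
    setIntegral_congr_fun measurableSet_Ioi (fB_eqOn2 c)]
  have h1 : ∫ x in Set.Iic (0:ℝ), gaussianPDFReal 0 1 x = 1/2 := by
    have : ∀ x, gaussianPDFReal 0 1 x = (Real.sqrt (2*π))⁻¹ * rexp (-(1/2) * x^2) := pdf_eq
    rw [funext this, MeasureTheory.integral_const_mul, gauss_Iic,
      integral_gaussian_Ioi]
    rw [show (√(π / (1/2)))/2 = (√(π / (1/2))) * (1/2) by ring, ← mul_assoc,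
      sqrt_alg (by norm_num : (0:ℝ) < 1/2)]
    norm_num
  have h2 : ∫ x in Set.Ioi (0:ℝ), (Real.sqrt (2*π))⁻¹ * rexp (-(1/2-c) * x^2)
      = (Real.sqrt (1-2*c))⁻¹/2 := by
    rw [MeasureTheory.integral_const_mul, integral_gaussian_Ioi]
    rw [show (√(π / (1/2-c)))/2 = (√(π / (1/2-c))) * (1/2) by ring, ← mul_assoc,
      sqrt_alg (by linarith : (0:ℝ) < 1/2-c), show (2:ℝ)*(1/2-c) = 1-2*c by ring]
    ring
  rw [h1, h2]

lemma pi_integral {α : Type*} [MeasurableSpace α] (μ : Measure α) [SigmaFinite μ] (k : ℕ)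
    (f : α → ℝ) :
    ∫ x : Fin k → α, ∏ i, f (x i) ∂(Measure.pi fun _ => μ) = (∫ a, f a ∂μ) ^ k := by
  letI : MeasureSpace α := ⟨μ⟩
  haveI : SigmaFinite (volume : Measure α) := ‹_›
  exact (MeasureTheory.integral_fintype_prod_eq_pow (ι := Fin k) f).trans (by rw [Fintype.card_fin])

lemma pi_integrable {α : Type*} [MeasurableSpace α] (μ : Measure α) [SigmaFinite μ] (k : ℕ)
    (f : α → ℝ) (hf : Integrable f μ) :
    Integrable (fun x : Fin k → α => ∏ i, f (x i)) (Measure.pi fun _ => μ) := by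
  letI : MeasureSpace α := ⟨μ⟩
  haveI : SigmaFinite (volume : Measure α) := ‹_›
  exact MeasureTheory.Integrable.fintype_prod (f := fun _ : Fin k => f) fun _ => hf

lemma markov {α : Type*} [MeasurableSpace α] (μ : Measure α) (f : α → ℝ)
    (hmeas : Measurable f) (hint : Integrable f μ) (hpos : ∀ x, 0 < f x)
    {E : Set α} (hE : MeasurableSet E) (q : ℝ) (hq : ∀ ω ∈ E, rexp q ≤ f ω) :
    μ E ≤ ENNReal.ofReal (rexp (-q) * ∫ x, f x ∂μ) := by
  have key : ENNReal.ofReal (rexp q) * μ E ≤ ENNReal.ofReal (∫ x, f x ∂μ) := by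
    rw [ofReal_integral_eq_lintegral_ofReal hint (ae_of_all _ fun x => (hpos x).le)]
    calc ENNReal.ofReal (rexp q) * μ E
        = ∫⁻ _ in E, ENNReal.ofReal (rexp q) ∂μ := by rw [setLIntegral_const, mul_comm]
      _ ≤ ∫⁻ x in E, ENNReal.ofReal (f x) ∂μ := by
          refine setLIntegral_mono (by fun_prop) fun x hx => ?_
          exact ENNReal.ofReal_le_ofReal (hq x hx)
      _ ≤ ∫⁻ x, ENNReal.ofReal (f x) ∂μ := setLIntegral_le_lintegral _ _
  have hexp : ENNReal.ofReal (rexp q) ≠ 0 := by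
    simp [ENNReal.ofReal_eq_zero, not_le, Real.exp_pos]
  have := mul_le_mul_right key (ENNReal.ofReal (rexp q))⁻¹
  rw [← mul_assoc, ENNReal.inv_mul_cancel hexp ENNReal.ofReal_ne_top, one_mul] at this
  refine this.trans_eq ?_
  rw [← ENNReal.ofReal_inv_of_pos (Real.exp_pos q), ← Real.exp_neg,
    ← ENNReal.ofReal_mul (Real.exp_pos (-q)).le]


lemma chernoff (m₁ m₂ : ℕ) {c : ℝ} (hc : c < 1/2) {E : Set ((Fin m₁ → ℝ) × (Fin m₂ → ℝ))}
    (hE : MeasurableSet E) (q : ℝ)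
    (hq : ∀ ω ∈ E, q ≤ c * ((∑ i, (ω.1 i)^2) + ∑ j, (max (ω.2 j) 0)^2)) :
    ((gaussVec m₁).prod (gaussVec m₂)) E ≤
      ENNReal.ofReal (rexp (-q) *
        ((Real.sqrt (1-2*c))⁻¹ ^ m₁ * (1/2 + (Real.sqrt (1-2*c))⁻¹/2) ^ m₂)) := by
  set f : (Fin m₁ → ℝ) × (Fin m₂ → ℝ) → ℝ :=
    fun ω => rexp (c * ((∑ i, (ω.1 i)^2) + ∑ j, (max (ω.2 j) 0)^2)) with hf_def
  have hsplit : f = fun ω =>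
      (∏ i, rexp (c * (ω.1 i)^2)) * (∏ j, rexp (c * (max (ω.2 j) 0)^2)) := by
    funext ω
    simp only [hf_def]
    rw [← Real.exp_sum, ← Real.exp_sum, ← Real.exp_add]
    congr 1
    rw [mul_add, Finset.mul_sum, Finset.mul_sum]
  have hmeas : Measurable f := by
    apply Measurable.exp
    apply Measurable.const_mul
    apply Measurable.add
    · exact Finset.measurable_sum _ fun i _ => ((measurable_pi_apply i).comp measurable_fst).pow_const 2
    · exact Finset.measurable_sum _ fun j _ =>
        (((measurable_pi_apply j).comp measurable_snd).max measurable_const).pow_const 2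
  have hint : Integrable f ((gaussVec m₁).prod (gaussVec m₂)) := by
    rw [hsplit]
    exact (pi_integrable _ m₁ _ (intA hc)).mul_prod (pi_integrable _ m₂ _ (intB hc))
  have hval : ∫ ω, f ω ∂((gaussVec m₁).prod (gaussVec m₂)) =
      (Real.sqrt (1-2*c))⁻¹ ^ m₁ * (1/2 + (Real.sqrt (1-2*c))⁻¹/2) ^ m₂ := by
    rw [hsplit]
    have h1 := MeasureTheory.integral_prod_mul (μ := gaussVec m₁) (ν := gaussVec m₂)
      (f := fun x : Fin m₁ → ℝ => ∏ i, rexp (c * (x i)^2))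
      (g := fun y : Fin m₂ → ℝ => ∏ j, rexp (c * (max (y j) 0)^2))
    refine h1.trans ?_
    rw [show (gaussVec m₁) = Measure.pi fun _ => gaussianReal 0 1 from rfl,
        show (gaussVec m₂) = Measure.pi fun _ => gaussianReal 0 1 from rfl,
        pi_integral (gaussianReal 0 1) m₁ (fun a => rexp (c * a^2)),
        pi_integral (gaussianReal 0 1) m₂ (fun a => rexp (c * (max a 0)^2)), IA hc, IB hc]
  calc ((gaussVec m₁).prod (gaussVec m₂)) E
      ≤ ENNReal.ofReal (rexp (-q) * ∫ ω, f ω ∂((gaussVec m₁).prod (gaussVec m₂))) := by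
        refine markov _ f hmeas hint (fun x => Real.exp_pos _) hE q fun ω hω => ?_
        exact Real.exp_le_exp.mpr (hq ω hω)
    _ = _ := by rw [hval]

lemma combine {MA MB α : ℝ} (hMA0 : 0 ≤ MA) (hMB0 : 0 ≤ MB) (hA : MA ≤ rexp α)
    (hB : MB ≤ rexp (α/2)) (m₁ m₂ : ℕ) :
    MA ^ m₁ * MB ^ m₂ ≤ rexp (α * (m₁ + m₂/2)) := by
  calc MA^m₁ * MB^m₂ ≤ rexp α ^ m₁ * rexp (α/2) ^ m₂ :=
        mul_le_mul (pow_le_pow_left₀ hMA0 hA _) (pow_le_pow_left₀ hMB0 hB _) (by positivity)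
          (by positivity)
    _ = rexp ((m₁:ℝ) * α + (m₂:ℝ) * (α/2)) := by
        rw [← Real.exp_nat_mul, ← Real.exp_nat_mul, ← Real.exp_add]
    _ = _ := by congr 1; ring

lemma ofReal_one_sub (e : ℝ) (he : 0 ≤ e) :
    ENNReal.ofReal (1 - e) ≤ 1 - ENNReal.ofReal e := by
  rcases le_or_gt e 1 with h | h
  · refine ENNReal.le_sub_of_add_le_right ENNReal.ofReal_ne_top ?_
    rw [← ENNReal.ofReal_add (by linarith) he, ← ENNReal.ofReal_one]
    exact ENNReal.ofReal_le_ofReal (by linarith)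
  · rw [ENNReal.ofReal_eq_zero.mpr (by linarith)]
    exact zero_le

lemma measS (m₁ m₂ : ℕ) : Measurable (fun ω : (Fin m₁ → ℝ) × (Fin m₂ → ℝ) =>
    (∑ i, (ω.1 i)^2) + ∑ j, (max (ω.2 j) 0)^2) := by
  apply Measurable.add
  · exact Finset.measurable_sum _ fun i _ =>
      ((measurable_pi_apply i).comp measurable_fst).pow_const 2
  · exact Finset.measurable_sum _ fun j _ =>
      (((measurable_pi_apply j).comp measurable_snd).max measurable_const).pow_const 2

/-- Exponential concentration of `√(‖h_A‖₂² + ‖(h_B)₊‖₂²)` around `√(m₁ + m₂/2)` for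
independent standard Gaussian vectors `h_A ∈ ℝ^{m₁}`, `h_B ∈ ℝ^{m₂}`. -/
theorem stmt_7 (ε₁ : ℝ) (hε₁ : 0 < ε₁ ∧ ε₁ < 1) :
    ∃ ε₂ > (0 : ℝ), ∃ ε₂' > (0 : ℝ), ∀ m₁ m₂ : ℕ, 0 < m₁ → 0 < m₂ →
      (ENNReal.ofReal (1 - Real.exp (-ε₂ * ((m₁ : ℝ) + (m₂ : ℝ) / 2))) ≤
        ((gaussVec m₁).prod (gaussVec m₂))
          {ω : (Fin m₁ → ℝ) × (Fin m₂ → ℝ) |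
            (1 - ε₁) * Real.sqrt ((m₁ : ℝ) + (m₂ : ℝ) / 2) <
              Real.sqrt ((∑ i, (ω.1 i) ^ 2) + ∑ j, (max (ω.2 j) 0) ^ 2)})
      ∧
      (ENNReal.ofReal (1 - Real.exp (-ε₂' * ((m₁ : ℝ) + (m₂ : ℝ) / 2))) ≤
        ((gaussVec m₁).prod (gaussVec m₂))
          {ω : (Fin m₁ → ℝ) × (Fin m₂ → ℝ) |
            Real.sqrt ((∑ i, (ω.1 i) ^ 2) + ∑ j, (max (ω.2 j) 0) ^ 2) <
              (1 + ε₁) * Real.sqrt ((m₁ : ℝ) + (m₂ : ℝ) / 2)}) := by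

  obtain ⟨hε0, hε1⟩ := hε₁
  set a := (1-ε₁)^2 with ha_def
  have ha0 : 0 < a := by rw [ha_def]; exact pow_pos (by linarith) 2
  have ha1 : a < 1 := by nlinarith
  set t := (1-a)/3 with ht_def
  set e2 := (1-a)^2/6 with he2_def
  set b := (1+ε₁)^2 with hb_def
  have hb1 : 1 < b := by nlinarith
  have hb4 : b < 4 := by nlinarith
  set u := (b-1)/12 with hu_def
  set e2' := (b-1)^2/18 with he2'_def
  have ht0 : 0 ≤ t := by rw [ht_def]; linarith
  have ht2 : -t < 1/2 := by rw [ht_def]; linarith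
  have hu0 : 0 ≤ u := by rw [hu_def]; linarith
  have hu4 : u ≤ 1/4 := by rw [hu_def]; linarith
  have hu2 : u < 1/2 := by linarith
  -- per-coordinate exponential bounds, lower tail
  have hrw : (1:ℝ) - 2*(-t) = 1 + 2*t := by ring
  have hLA : (Real.sqrt (1-2*(-t)))⁻¹ ≤ rexp (-(t*a+e2)) := by
    rw [hrw]
    refine (sqrt_aux1 t ht0).trans ?_
    have he := Real.add_one_le_exp (-(t*a+e2))
    have heq : 1 - t + 1.5*t^2 = 1 + -(t*a+e2) := by rw [ht_def, he2_def]; ring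
    linarith
  have hLB : 1/2 + (Real.sqrt (1-2*(-t)))⁻¹/2 ≤ rexp (-(t*a+e2)/2) := by
    rw [hrw]
    have hs := sqrt_aux1 t ht0
    have he := Real.add_one_le_exp (-(t*a+e2)/2)
    have heq : 1/2 + (1 - t + 1.5*t^2)/2 = 1 + -(t*a+e2)/2 := by rw [ht_def, he2_def]; ring
    linarith
  -- per-coordinate exponential bounds, upper tail
  have hUA : (Real.sqrt (1-2*u))⁻¹ ≤ rexp (u*b-e2') := by
    refine (sqrt_aux2 u hu0 hu4).trans ?_
    have he := Real.add_one_le_exp (u*b-e2')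
    have heq : 1 + u + 4*u^2 = 1 + (u*b-e2') := by rw [hu_def, he2'_def]; ring
    linarith
  have hUB : 1/2 + (Real.sqrt (1-2*u))⁻¹/2 ≤ rexp ((u*b-e2')/2) := by
    have hs := sqrt_aux2 u hu0 hu4
    have he := Real.add_one_le_exp ((u*b-e2')/2)
    have heq : 1/2 + (1 + u + 4*u^2)/2 = 1 + (u*b-e2')/2 := by rw [hu_def, he2'_def]; ring
    linarith
  have h1a : (0:ℝ) < 1 - a := by linarith
  refine ⟨e2, by rw [he2_def]; exact div_pos (pow_pos h1a 2) (by norm_num),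
    e2', by rw [he2'_def]; exact div_pos (pow_pos (by linarith) 2) (by norm_num), ?_⟩
  intro m₁ m₂ hm₁ hm₂
  set N := (m₁:ℝ) + (m₂:ℝ)/2 with hN_def
  have hN0 : (0:ℝ) ≤ N := by
    rw [hN_def]; positivity
  constructor
  · -- lower tail
    set bad : Set ((Fin m₁ → ℝ) × (Fin m₂ → ℝ)) :=
      {ω | (∑ i, (ω.1 i)^2) + ∑ j, (max (ω.2 j) 0)^2 ≤ a*N} with hbad_def
    have hbadM : MeasurableSet bad := measurableSet_le (measS m₁ m₂) measurable_const
    have hch := chernoff m₁ m₂ ht2 hbadM (-t*(a*N)) (fun ω hω => by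
      have hω' : (∑ i, (ω.1 i)^2) + ∑ j, (max (ω.2 j) 0)^2 ≤ a*N := hω
      calc -t*(a*N) ≤ -t*((∑ i, (ω.1 i)^2) + ∑ j, (max (ω.2 j) 0)^2) :=
            mul_le_mul_of_nonpos_left hω' (by linarith)
        _ = _ := by ring_nf)
    have hcomb := combine (α := -(t*a+e2)) (inv_nonneg.mpr (Real.sqrt_nonneg _))
      (by positivity) hLA hLB m₁ m₂
    have hreal : rexp (-(-t*(a*N))) *
        ((Real.sqrt (1-2*(-t)))⁻¹ ^ m₁ * (1/2 + (Real.sqrt (1-2*(-t)))⁻¹/2) ^ m₂)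
        ≤ rexp (-e2*N) := by
      calc rexp (-(-t*(a*N))) *
          ((Real.sqrt (1-2*(-t)))⁻¹ ^ m₁ * (1/2 + (Real.sqrt (1-2*(-t)))⁻¹/2) ^ m₂)
          ≤ rexp (-(-t*(a*N))) * rexp (-(t*a+e2) * ((m₁:ℝ) + (m₂:ℝ)/2)) :=
            mul_le_mul_of_nonneg_left hcomb (Real.exp_pos _).le
        _ = rexp (-(-t*(a*N)) + -(t*a+e2) * ((m₁:ℝ) + (m₂:ℝ)/2)) := (Real.exp_add _ _).symm
        _ = rexp (-e2*N) := by rw [hN_def]; congr 1; ring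
    have hbound : ((gaussVec m₁).prod (gaussVec m₂)) bad ≤ ENNReal.ofReal (rexp (-e2*N)) :=
      hch.trans (ENNReal.ofReal_le_ofReal hreal)
    have hsub : badᶜ ⊆ {ω : (Fin m₁ → ℝ) × (Fin m₂ → ℝ) |
        (1 - ε₁) * Real.sqrt N <
          Real.sqrt ((∑ i, (ω.1 i) ^ 2) + ∑ j, (max (ω.2 j) 0) ^ 2)} := by
      intro ω hω
      have h1 : a*N < (∑ i, (ω.1 i)^2) + ∑ j, (max (ω.2 j) 0)^2 := lt_of_not_ge hω
      have h2 : Real.sqrt (a*N) < Real.sqrt ((∑ i, (ω.1 i)^2) + ∑ j, (max (ω.2 j) 0)^2) :=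
        Real.sqrt_lt_sqrt (by positivity) h1
      have h3 : Real.sqrt (a*N) = (1-ε₁) * Real.sqrt N := by
        rw [ha_def, Real.sqrt_mul (sq_nonneg _) N, Real.sqrt_sq (by linarith)]
      exact h3 ▸ h2
    calc ENNReal.ofReal (1 - rexp (-e2*N)) ≤ 1 - ENNReal.ofReal (rexp (-e2*N)) :=
          ofReal_one_sub _ (Real.exp_pos _).le
      _ ≤ 1 - ((gaussVec m₁).prod (gaussVec m₂)) bad := tsub_le_tsub_left hbound 1
      _ = ((gaussVec m₁).prod (gaussVec m₂)) badᶜ := (prob_compl_eq_one_sub hbadM).symm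
      _ ≤ _ := measure_mono hsub
  · -- upper tail
    set bad : Set ((Fin m₁ → ℝ) × (Fin m₂ → ℝ)) :=
      {ω | b*N ≤ (∑ i, (ω.1 i)^2) + ∑ j, (max (ω.2 j) 0)^2} with hbad_def
    have hbadM : MeasurableSet bad := measurableSet_le measurable_const (measS m₁ m₂)
    have hch := chernoff m₁ m₂ hu2 hbadM (u*(b*N)) (fun ω hω => by
      have hω' : b*N ≤ (∑ i, (ω.1 i)^2) + ∑ j, (max (ω.2 j) 0)^2 := hω
      exact mul_le_mul_of_nonneg_left hω' hu0)
    have hcomb := combine (α := u*b-e2') (inv_nonneg.mpr (Real.sqrt_nonneg _))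
      (by positivity) hUA hUB m₁ m₂
    have hreal : rexp (-(u*(b*N))) *
        ((Real.sqrt (1-2*u))⁻¹ ^ m₁ * (1/2 + (Real.sqrt (1-2*u))⁻¹/2) ^ m₂)
        ≤ rexp (-e2'*N) := by
      calc rexp (-(u*(b*N))) *
          ((Real.sqrt (1-2*u))⁻¹ ^ m₁ * (1/2 + (Real.sqrt (1-2*u))⁻¹/2) ^ m₂)
          ≤ rexp (-(u*(b*N))) * rexp ((u*b-e2') * ((m₁:ℝ) + (m₂:ℝ)/2)) :=
            mul_le_mul_of_nonneg_left hcomb (Real.exp_pos _).le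
        _ = rexp (-(u*(b*N)) + (u*b-e2') * ((m₁:ℝ) + (m₂:ℝ)/2)) := (Real.exp_add _ _).symm
        _ = rexp (-e2'*N) := by rw [hN_def]; congr 1; ring
    have hbound : ((gaussVec m₁).prod (gaussVec m₂)) bad ≤ ENNReal.ofReal (rexp (-e2'*N)) :=
      hch.trans (ENNReal.ofReal_le_ofReal hreal)
    have hsub : badᶜ ⊆ {ω : (Fin m₁ → ℝ) × (Fin m₂ → ℝ) |
        Real.sqrt ((∑ i, (ω.1 i) ^ 2) + ∑ j, (max (ω.2 j) 0) ^ 2) <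
          (1 + ε₁) * Real.sqrt N} := by
      intro ω hω
      have h1 : (∑ i, (ω.1 i)^2) + ∑ j, (max (ω.2 j) 0)^2 < b*N := lt_of_not_ge hω
      have h2 : Real.sqrt ((∑ i, (ω.1 i)^2) + ∑ j, (max (ω.2 j) 0)^2) < Real.sqrt (b*N) :=
        Real.sqrt_lt_sqrt (by positivity) h1
      have h3 : Real.sqrt (b*N) = (1+ε₁) * Real.sqrt N := by
        rw [hb_def, Real.sqrt_mul (sq_nonneg _) N, Real.sqrt_sq (by linarith)]
      exact h3 ▸ h2
    calc ENNReal.ofReal (1 - rexp (-e2'*N)) ≤ 1 - ENNReal.ofReal (rexp (-e2'*N)) :=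
          ofReal_one_sub _ (Real.exp_pos _).le
      _ ≤ 1 - ((gaussVec m₁).prod (gaussVec m₂)) bad := tsub_le_tsub_left hbound 1
      _ = ((gaussVec m₁).prod (gaussVec m₂)) badᶜ := (prob_compl_eq_one_sub hbadM).symm
      _ ≤ _ := measure_mono hsub
end

section
/- Let n be a positive integer, g ∈ ℝⁿ, and c ∈ ℝ with c < ‖g‖₂. Let 𝟙 ∈ ℝⁿ denote the all-ones vector. Then inf{ ⟨𝟙, x⟩ : x ∈ ℝⁿ, ‖x‖₂ ≤ 1 and ⟨g, x⟩ + c ≤ 0 } = sup{ −‖𝟙 + λ g‖₂ + λ c : λ ∈ ℝ, λ ≥ 0 }. -/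
/-- Euclidean inner product on `Fin k → ℝ`. -/
noncomputable def dotp {k : ℕ} (u v : Fin k → ℝ) : ℝ := ∑ i, u i * v i

/-- Euclidean norm on `Fin k → ℝ`. -/
noncomputable def norm2 {k : ℕ} (v : Fin k → ℝ) : ℝ := Real.sqrt (∑ i, v i ^ 2)

lemma norm2_nonneg {k : ℕ} (v : Fin k → ℝ) : 0 ≤ norm2 v := Real.sqrt_nonneg _
lemma norm2_sq {k : ℕ} (v : Fin k → ℝ) : (norm2 v) ^ 2 = ∑ i, v i ^ 2 :=
  Real.sq_sqrt (Finset.sum_nonneg fun _ _ => sq_nonneg _)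
lemma norm2_smul {k : ℕ} (a : ℝ) (v : Fin k → ℝ) :
    norm2 (fun i => a * v i) = |a| * norm2 v := by
  unfold norm2
  rw [← Real.sqrt_sq_eq_abs, ← Real.sqrt_mul (sq_nonneg a)]
  congr 1
  rw [Finset.mul_sum]
  exact Finset.sum_congr rfl fun i _ => by ring

lemma sum_expand {k : ℕ} (l : ℝ) (g : Fin k → ℝ) :
    ∑ i, (1 + l * g i) ^ 2 = (k : ℝ) + 2 * l * (∑ i, g i) + l ^ 2 * (∑ i, g i ^ 2) := by
  have h : ∀ i ∈ Finset.univ, (1 + l * g i) ^ 2 = 1 + (2 * l) * g i + l ^ 2 * g i ^ 2 :=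
    fun i _ => by ring
  rw [Finset.sum_congr rfl h, Finset.sum_add_distrib, Finset.sum_add_distrib,
    ← Finset.mul_sum, ← Finset.mul_sum, Finset.sum_const, Finset.card_univ,
    Fintype.card_fin, nsmul_eq_mul, mul_one]

set_option maxHeartbeats 2000000 in
lemma exists_opt {n : ℕ} (hn : 0 < n) (g : Fin n → ℝ) (c : ℝ) (hc : c < norm2 g) :
    ∃ (l : ℝ) (x : Fin n → ℝ), 0 ≤ l ∧ norm2 x ≤ 1 ∧ dotp g x + c ≤ 0 ∧
      (∑ i, x i) = -norm2 (fun i => 1 + l * g i) + l * c := by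
  set s := ∑ i, g i with hs
  set G := ∑ i, g i ^ 2 with hG
  have hn' : (0 : ℝ) < n := by exact_mod_cast hn
  set sn := Real.sqrt n with hsndef
  have hsn : sn ^ 2 = n := Real.sq_sqrt hn'.le
  have hsn0 : 0 < sn := Real.sqrt_pos.mpr hn'
  have hGnn : 0 ≤ G := Finset.sum_nonneg fun _ _ => sq_nonneg _
  have hng : norm2 g = Real.sqrt G := rfl
  rcases le_or_gt (c * sn) s with hA | hB
  · -- Case A: constraint inactive at the ball minimizer
    refine ⟨0, fun _ => -1 / sn, le_refl 0, ?_, ?_, ?_⟩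
    · unfold norm2
      have : (∑ _i : Fin n, (-1 / sn) ^ 2) = 1 := by
        rw [Finset.sum_const, Finset.card_univ, Fintype.card_fin, nsmul_eq_mul]
        field_simp
        nlinarith [hsn]
      rw [this, Real.sqrt_one]
    · unfold dotp
      have : (∑ i, g i * (-1 / sn)) = s * (-1 / sn) := by rw [← Finset.sum_mul]
      rw [this]
      have h1 : s * (-1 / sn) = -(s / sn) := by ring
      rw [h1]
      have h2 := (le_div_iff₀ hsn0).mpr hA
      linarith
    · have h1 : (∑ _i : Fin n, (-1 / sn)) = (n : ℝ) * (-1 / sn) := by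
        rw [Finset.sum_const, Finset.card_univ, Fintype.card_fin, nsmul_eq_mul]
      have h2 : (fun i => 1 + (0:ℝ) * g i) = fun _ : Fin n => (1:ℝ) := by
        funext i; ring
      have h3 : norm2 (fun _ : Fin n => (1:ℝ)) = sn := by
        unfold norm2
        rw [show (∑ _i : Fin n, (1:ℝ)^2) = (n:ℝ) by
          rw [Finset.sum_const, Finset.card_univ, Fintype.card_fin, nsmul_eq_mul]; ring]
      rw [h1, h2, h3]
      field_simp
      nlinarith [hsn]
  · -- Case B: constraint active
    have hG0 : 0 < G := by
      rcases hGnn.lt_or_eq with h | h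
      · exact h
      · exfalso
        have hg0 : ∀ i ∈ Finset.univ, g i ^ 2 = 0 := by
          intro i _
          have := (Finset.sum_eq_zero_iff_of_nonneg (fun i _ => sq_nonneg (g i))).mp h.symm
          exact this i (Finset.mem_univ i)
        have hs0 : s = 0 := Finset.sum_eq_zero fun i hi => by
          have := hg0 i hi; nlinarith [this]
        have hG0' : Real.sqrt G = 0 := by rw [← h, Real.sqrt_zero]
        rw [hng, hG0'] at hc
        rw [hs0] at hB
        nlinarith [mul_pos (neg_pos.mpr hc) hsn0]
    have hsG : (Real.sqrt G) ^ 2 = G := Real.sq_sqrt hGnn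
    have hsG0 : 0 < Real.sqrt G := Real.sqrt_pos.mpr hG0
    rw [hng] at hc
    have hCS : s ^ 2 ≤ (n : ℝ) * G := by
      have h := Finset.sum_mul_sq_le_sq_mul_sq Finset.univ (fun _ : Fin n => (1:ℝ)) g
      simp only [one_mul, one_pow] at h
      rw [Finset.sum_const, Finset.card_univ, Fintype.card_fin, nsmul_eq_mul, mul_one] at h
      exact h
    have hA2 : (sn * Real.sqrt G) ^ 2 = (n : ℝ) * G := by rw [mul_pow, hsn, hsG]
    have hslow : -(sn * Real.sqrt G) ≤ s := by
      nlinarith [sq_nonneg (s + sn * Real.sqrt G), hCS, hA2, mul_pos hsn0 hsG0]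
    have hclow : -Real.sqrt G < c := by
      nlinarith [hslow, hB, hsn0, hsG0]
    have hc2 : c ^ 2 < G := by nlinarith [hc, hclow, hsG]
    rcases hCS.lt_or_eq with hB1 | hB2
    · -- B1 : s^2 < n*G, generic case
      have hden : 0 < G - c ^ 2 := by linarith
      set r := Real.sqrt (((n : ℝ) * G - s ^ 2) / (G - c ^ 2)) with hrdef
      have hargpos : 0 < ((n : ℝ) * G - s ^ 2) / (G - c ^ 2) := div_pos (by linarith) hden
      have hrpos : 0 < r := Real.sqrt_pos.mpr hargpos
      have hr2 : r ^ 2 = ((n : ℝ) * G - s ^ 2) / (G - c ^ 2) := Real.sq_sqrt hargpos.le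
      have hr2' : r ^ 2 * (G - c ^ 2) = (n : ℝ) * G - s ^ 2 := by
        rw [hr2]; field_simp
      set l := (c * r - s) / G with hldef
      have hlG : l * G = c * r - s := by rw [hldef]; field_simp
      have hl0 : 0 ≤ l := by
        rw [hldef]
        apply div_nonneg _ hG0.le
        rcases le_or_gt 0 c with hc0 | hc0
        · rcases le_or_gt s 0 with hs0 | hs0
          · nlinarith [mul_nonneg hc0 hrpos.le]
          · have hcpos : 0 < c := by nlinarith [hB, hsn0, hs0]
            have h1 : s ^ 2 < c ^ 2 * n := by nlinarith [hB, hs0, hsn, mul_pos hcpos hsn0]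
            have hr2c : c ^ 2 * (r ^ 2 * (G - c ^ 2)) = c ^ 2 * ((n : ℝ) * G - s ^ 2) := by
              rw [hr2']
            have h2 : s ^ 2 < (c * r) ^ 2 := by
              nlinarith [hr2c, mul_pos hG0 (show (0:ℝ) < c ^ 2 * n - s ^ 2 by linarith), hden, sq_nonneg c]
            nlinarith [h2, mul_nonneg hcpos.le hrpos.le, hs0]
        · have hcsn : c * sn < 0 := mul_neg_of_neg_of_pos hc0 hsn0
          have hs0 : s < 0 := by linarith
          have h1 : c ^ 2 * n < s ^ 2 := by
            nlinarith [mul_pos (sub_pos.mpr hB) (show (0:ℝ) < -(s + c * sn) by linarith), hsn]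
          have hr2c : c ^ 2 * (r ^ 2 * (G - c ^ 2)) = c ^ 2 * ((n : ℝ) * G - s ^ 2) := by
            rw [hr2']
          have h2 : (c * r) ^ 2 < s ^ 2 := by
            nlinarith [hr2c, mul_pos hG0 (show (0:ℝ) < s ^ 2 - c ^ 2 * n by linarith), hden, sq_nonneg c]
          nlinarith [h2, hs0, mul_nonneg (neg_nonneg.mpr hc0.le) hrpos.le]
      have hN2 : (norm2 (fun i => 1 + l * g i)) ^ 2 = (n : ℝ) + 2 * l * s + l ^ 2 * G := by
        rw [norm2_sq, hs, hG]; exact sum_expand l g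
      set N := norm2 (fun i => 1 + l * g i) with hNdef
      have hN0 : 0 ≤ N := norm2_nonneg _
      have hNr2 : N ^ 2 = r ^ 2 := by
        have key : G * N ^ 2 = G * r ^ 2 := by
          rw [hN2]
          linear_combination (s + l * G + c * r) * hlG - hr2'
        exact mul_left_cancel₀ (ne_of_gt hG0) key
      have hNr : N = r := by
        rw [← Real.sqrt_sq hN0, hNr2, Real.sqrt_sq hrpos.le]
      have hr0 : r ≠ 0 := ne_of_gt hrpos
      refine ⟨l, fun i => -(1 / r) * (1 + l * g i), hl0, ?_, ?_, ?_⟩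
      · rw [norm2_smul, abs_neg, abs_of_nonneg (by positivity : (0:ℝ) ≤ 1 / r), ← hNdef, hNr]
        field_simp
        exact le_refl _
      · have hd : dotp g (fun i => -(1 / r) * (1 + l * g i)) = -(1 / r) * (s + l * G) := by
          unfold dotp
          have h1 : ∀ i ∈ Finset.univ, g i * (-(1 / r) * (1 + l * g i))
              = -(1 / r) * g i + (-(1 / r) * l) * g i ^ 2 := fun i _ => by ring
          rw [Finset.sum_congr rfl h1, Finset.sum_add_distrib, ← Finset.mul_sum,
            ← Finset.mul_sum, ← hs, ← hG]
          ring
        rw [hd]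
        have heq : -(1 / r) * (s + l * G) + c = 0 := by rw [hlG]; field_simp; ring
        linarith [heq]
      · have hsum : ∑ i : Fin n, (-(1 / r) * (1 + l * g i)) = -(1 / r) * ((n : ℝ) + l * s) := by
          rw [← Finset.mul_sum]
          congr 1
          rw [Finset.sum_add_distrib, ← Finset.mul_sum, Finset.sum_const, Finset.card_univ,
            Fintype.card_fin, nsmul_eq_mul, mul_one, ← hs]
        rw [hsum, ← hNdef, hNr]
        have hrr : r ^ 2 = (n : ℝ) + 2 * l * s + l ^ 2 * G := by rw [← hNr2, hN2]
        have hkey : (n : ℝ) + l * s = r ^ 2 - l * (c * r) := by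
          linear_combination -hrr - l * hlG
        rw [hkey]
        field_simp
        ring
    · -- B2 : s^2 = n*G, g is a negative constant vector
      have hs2 : s ^ 2 = (n : ℝ) * G := hB2
      set t := s / n with ht
      have hn0 : (n : ℝ) ≠ 0 := ne_of_gt hn'
      have hzsum : ∑ i, (g i - t) ^ 2 = 0 := by
        have hexp : ∀ i ∈ Finset.univ, (g i - t) ^ 2
            = g i ^ 2 - (2 * t) * g i + t ^ 2 := fun i _ => by ring
        rw [Finset.sum_congr rfl hexp]
        rw [Finset.sum_add_distrib, Finset.sum_sub_distrib, ← Finset.mul_sum,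
          Finset.sum_const, Finset.card_univ, Fintype.card_fin, nsmul_eq_mul, ← hs, ← hG, ht]
        field_simp
        nlinarith [hs2]
      have hgt : ∀ i, g i = t := by
        intro i
        have h0 : ∀ j ∈ Finset.univ, (0:ℝ) ≤ (g j - t) ^ 2 := fun j _ => sq_nonneg _
        have hz := (Finset.sum_eq_zero_iff_of_nonneg h0).mp hzsum i (Finset.mem_univ i)
        have := sq_eq_zero_iff.mp hz
        linarith [this]
      have hsneg : s < 0 := by
        by_contra h
        push_neg at h
        have hcsn : 0 < c * sn := lt_of_le_of_lt h hB
        have hc0 : 0 < c := by nlinarith [hcsn, hsn0]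
        nlinarith [hB, h, hsn, hs2, hc2, hn', mul_pos hc0 hsn0]
      have hs0 : s ≠ 0 := ne_of_lt hsneg
      have hc2n : c ^ 2 * n < s ^ 2 := by nlinarith [hc2, hn', hs2]
      set l := -(n : ℝ) / s with hldef
      have hl0 : 0 < l := div_pos_iff.mpr (Or.inr ⟨by linarith, hsneg⟩)
      refine ⟨l, fun _ => c * l / n, hl0.le, ?_, ?_, ?_⟩
      · unfold norm2
        have hsum : (∑ _i : Fin n, (c * l / n) ^ 2) = (n : ℝ) * (c * l / n) ^ 2 := by
          rw [Finset.sum_const, Finset.card_univ, Fintype.card_fin, nsmul_eq_mul]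
        rw [hsum]
        apply Real.sqrt_le_one.mpr
        rw [hldef]
        have heq : (n : ℝ) * (c * (-(n : ℝ) / s) / n) ^ 2 = c ^ 2 * n / s ^ 2 := by
          field_simp
        rw [heq]
        have hs2pos : 0 < s ^ 2 := by nlinarith [hsneg]
        rw [div_le_one hs2pos]
        linarith [hc2n]
      · unfold dotp
        have hsum : (∑ i, g i * (c * l / n)) = s * (c * l / n) := by
          rw [← Finset.sum_mul, ← hs]
        rw [hsum, hldef]
        have : s * (c * (-(n : ℝ) / s) / n) = -c := by field_simp
        rw [this]
        linarith
      · have hfun : (fun i => 1 + l * g i) = (fun _ : Fin n => (0:ℝ)) := by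
          funext i
          rw [hgt i, hldef, ht]
          field_simp
          ring
        rw [hfun]
        have h0 : norm2 (fun _ : Fin n => (0:ℝ)) = 0 := by
          unfold norm2; simp
        rw [h0]
        have hsum : (∑ _i : Fin n, (c * l / n)) = (n : ℝ) * (c * l / n) := by
          rw [Finset.sum_const, Finset.card_univ, Fintype.card_fin, nsmul_eq_mul]
        rw [hsum]
        field_simp
        ring

lemma neg_le_dotp {k : ℕ} (u v : Fin k → ℝ) : -(norm2 u * norm2 v) ≤ dotp u v := by
  have h := Finset.sum_mul_sq_le_sq_mul_sq Finset.univ u v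
  have h2 : (dotp u v) ^ 2 ≤ (norm2 u * norm2 v) ^ 2 := by
    rw [mul_pow, norm2_sq, norm2_sq]; exact h
  nlinarith [mul_nonneg (norm2_nonneg u) (norm2_nonneg v), sq_nonneg (dotp u v + norm2 u * norm2 v)]


lemma weak_dual {n : ℕ} (g : Fin n → ℝ) (c : ℝ) (x : Fin n → ℝ)
    (hx1 : norm2 x ≤ 1) (hx2 : dotp g x + c ≤ 0) (l : ℝ) (hl : 0 ≤ l) :
    -norm2 (fun i => 1 + l * g i) + l * c ≤ ∑ i, x i := by
  have hexp : dotp (fun i => 1 + l * g i) x = (∑ i, x i) + l * dotp g x := by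
    unfold dotp
    rw [Finset.mul_sum, ← Finset.sum_add_distrib]
    exact Finset.sum_congr rfl fun i _ => by ring
  have h1 := neg_le_dotp (fun i => 1 + l * g i) x
  have hN := norm2_nonneg (fun i => 1 + l * g i)
  have hx0 := norm2_nonneg x
  nlinarith [mul_le_of_le_one_right hN hx1, mul_le_mul_of_nonneg_left (by linarith : dotp g x ≤ -c) hl]


/-- Strong Lagrange duality for minimizing `⟨𝟙,x⟩` over the intersection of the unit ball
with the halfspace `⟨g,x⟩ + c ≤ 0`, under the Slater condition `c < ‖g‖₂`:
`inf { Σᵢ xᵢ : ‖x‖₂ ≤ 1, ⟨g,x⟩ + c ≤ 0 } = sup { −‖1+λg‖₂ + λc : λ ≥ 0 }`. -/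
theorem stmt_10 (n : ℕ) (hn : 0 < n) (g : Fin n → ℝ) (c : ℝ) (hc : c < norm2 g) :
    sInf {y : ℝ | ∃ x : Fin n → ℝ, norm2 x ≤ 1 ∧ dotp g x + c ≤ 0 ∧ y = ∑ i, x i}
      = sSup {y : ℝ | ∃ l : ℝ, 0 ≤ l ∧
          y = -norm2 (fun i => 1 + l * g i) + l * c} := by
  obtain ⟨l₀, x₀, hl₀, hx1, hx2, hval⟩ := exists_opt hn g c hc
  set P := {y : ℝ | ∃ x : Fin n → ℝ, norm2 x ≤ 1 ∧ dotp g x + c ≤ 0 ∧ y = ∑ i, x i} with hP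
  set D := {y : ℝ | ∃ l : ℝ, 0 ≤ l ∧ y = -norm2 (fun i => 1 + l * g i) + l * c} with hD
  have hvP : (∑ i, x₀ i) ∈ P := ⟨x₀, hx1, hx2, rfl⟩
  have hvD : (∑ i, x₀ i) ∈ D := ⟨l₀, hl₀, hval⟩
  have hbddP : BddBelow P := by
    refine ⟨-(norm2 (fun _ : Fin n => (1:ℝ))), ?_⟩
    rintro y ⟨x, hxn, _, rfl⟩
    have hdot : dotp (fun _ : Fin n => (1:ℝ)) x = ∑ i, x i := by
      unfold dotp; simp
    have h1 := neg_le_dotp (fun _ : Fin n => (1:ℝ)) x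
    have h2 : norm2 (fun _ : Fin n => (1:ℝ)) * norm2 x ≤ norm2 (fun _ : Fin n => (1:ℝ)) :=
      mul_le_of_le_one_right (norm2_nonneg _) hxn
    rw [hdot] at h1
    linarith
  have hbddD : BddAbove D := by
    refine ⟨∑ i, x₀ i, ?_⟩
    rintro d ⟨l, hl, rfl⟩
    exact weak_dual g c x₀ hx1 hx2 l hl
  apply le_antisymm
  · calc sInf P ≤ ∑ i, x₀ i := csInf_le hbddP hvP
      _ ≤ sSup D := le_csSup hbddD hvD
  · apply csSup_le ⟨_, hvD⟩
    rintro d ⟨l, hl, rfl⟩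
    apply le_csInf ⟨_, hvP⟩
    rintro y ⟨x, hxn, hxf, rfl⟩
    exact weak_dual g c x hxn hxf l hl
end

section
/- Let n be a positive integer, 0 ≤ k ≤ n, and a ∈ ℝⁿ. Then inf{ Σ_{i=1}^{n−k} |xᵢ| + Σ_{i=n−k+1}^{n} xᵢ + ⟨a, x⟩ : x ∈ ℝⁿ, ‖x‖₂ ≤ 1 } = −√( Σ_{i=1}^{n−k} (max(|aᵢ| − 1, 0))² + Σ_{i=n−k+1}^{n} (1 + aᵢ)² ). -/
/-- Closed-form evaluation of the minimization over the unit ball: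
`inf { Σ_{i=1}^{n−k}|xᵢ| + Σ_{i=n−k+1}^{n} xᵢ + ⟨a,x⟩ : ‖x‖₂ ≤ 1 }
  = −√( Σ_{i=1}^{n−k} (max(|aᵢ|−1,0))² + Σ_{i=n−k+1}^{n} (1+aᵢ)² )`. -/
theorem stmt_11 (n k : ℕ) (hn : 0 < n) (hk : k ≤ n) (a : Fin n → ℝ) :
    sInf {y : ℝ | ∃ x : Fin n → ℝ, norm2 x ≤ 1 ∧
        y = (∑ i : Fin n, if (i : ℕ) < n - k then |x i| else x i) + dotp a x}
      = -Real.sqrt (∑ i : Fin n,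
          if (i : ℕ) < n - k then (max (|a i| - 1) 0) ^ 2 else (1 + a i) ^ 2) := by
  set m := n - k with hm
  set b : Fin n → ℝ := fun i => if (i:ℕ) < m then max (|a i| - 1) 0 else |1 + a i| with hb
  have hbnn : ∀ i, 0 ≤ b i := by
    intro i; by_cases h : (i:ℕ) < m <;> simp [hb, h, le_max_right, abs_nonneg]
  have hsq : (∑ i : Fin n, if (i:ℕ) < m then (max (|a i| - 1) 0)^2 else (1+a i)^2)
      = ∑ i, b i ^ 2 := by
    apply Finset.sum_congr rfl; intro i _
    by_cases h : (i:ℕ) < m <;> simp [hb, h, sq_abs]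
  rw [hsq]
  set B := Real.sqrt (∑ i, b i ^ 2) with hB
  have hBnn : 0 ≤ B := Real.sqrt_nonneg _
  have hsumnn : 0 ≤ ∑ i, b i ^ 2 := Finset.sum_nonneg fun i _ => sq_nonneg _
  have hB2 : B ^ 2 = ∑ i, b i ^ 2 := Real.sq_sqrt hsumnn
  -- signs
  set s : Fin n → ℝ := fun i => if (i:ℕ) < m then (if 0 ≤ a i then 1 else -1)
      else (if 0 ≤ 1 + a i then 1 else -1) with hs
  have hsabs : ∀ i, |s i| = 1 := by
    intro i
    by_cases h : (i:ℕ) < m <;> by_cases h2 : (0:ℝ) ≤ a i <;> by_cases h3 : (0:ℝ) ≤ 1 + a i <;>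
      simp [hs, h, h2, h3]
  have hssq : ∀ i, s i ^ 2 = 1 := by
    intro i; rw [← sq_abs, hsabs i, one_pow]
  -- witness
  set x : Fin n → ℝ := fun i => -(s i) * b i / B with hx
  have hxsq : ∀ i, x i ^ 2 = b i ^ 2 / B ^ 2 := by
    intro i
    simp only [hx]
    rw [div_pow, mul_pow, neg_pow, ← sq_abs (s i), hsabs i]
    ring_nf
  have hxnorm : norm2 x ≤ 1 := by
    unfold norm2
    have : (∑ i, x i ^ 2) = (∑ i, b i ^ 2) / B ^ 2 := by
      rw [Finset.sum_div]; exact Finset.sum_congr rfl fun i _ => hxsq i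
    rw [this, ← hB2]
    rcases eq_or_lt_of_le hBnn with h0 | h0
    · simp [← h0]
    · rw [div_self (by positivity)]; simp
  -- value of the witness
  have hval : (∑ i : Fin n, if (i:ℕ) < m then |x i| else x i) + dotp a x = -B := by
    have hterm : ∀ i : Fin n,
        (if (i:ℕ) < m then |x i| else x i) + a i * x i = -(b i ^ 2) / B := by
      intro i
      by_cases h : (i:ℕ) < m
      · simp only [h, if_pos]
        have hax : a i * x i = -(|a i| * b i) / B := by
          simp only [hx]
          by_cases h2 : (0 : ℝ) ≤ a i
          · simp [hs, h, h2, abs_of_nonneg h2]; ring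
          · simp [hs, h, h2, abs_of_neg (lt_of_not_ge h2)]; ring
        have habs : |x i| = b i / B := by
          simp only [hx, abs_div, abs_mul, abs_neg, hsabs i, one_mul,
            abs_of_nonneg (hbnn i), abs_of_nonneg hBnn]
        rw [habs, hax]
        have hbi : (1 - |a i|) * b i = -(b i ^ 2) := by
          rcases le_or_gt (|a i|) 1 with hle | hlt
          · have : b i = 0 := by simp [hb, h, max_eq_right, sub_nonpos.mpr hle]
            simp [this]
          · have : b i = |a i| - 1 := by
              simp [hb, h, max_eq_left (by linarith : (0:ℝ) ≤ |a i| - 1)]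
            rw [this]; ring
        rw [← add_div]
        congr 1
        linarith [hbi]
      · simp only [h, if_neg, not_false_iff]
        have hbi : b i = |1 + a i| := by simp [hb, h]
        have : x i + a i * x i = (1 + a i) * x i := by ring
        rw [this]
        have : (1 + a i) * x i = -((1 + a i) * s i) * b i / B := by
          simp only [hx]; ring
        rw [this]
        have h1s : (1 + a i) * s i = |1 + a i| := by
          by_cases h3 : (0:ℝ) ≤ 1 + a i
          · simp [hs, h, h3, abs_of_nonneg h3]
          · simp [hs, h, h3, abs_of_neg (lt_of_not_ge h3)]
        rw [h1s, ← hbi]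
        ring_nf
    have hsum : (∑ i : Fin n, if (i:ℕ) < m then |x i| else x i) + dotp a x
        = ∑ i : Fin n, ((if (i:ℕ) < m then |x i| else x i) + a i * x i) := by
      rw [Finset.sum_add_distrib]; rfl
    rw [hsum]
    have : (∑ i : Fin n, ((if (i:ℕ) < m then |x i| else x i) + a i * x i))
        = ∑ i : Fin n, -(b i ^ 2) / B := Finset.sum_congr rfl fun i _ => hterm i
    rw [this]
    rw [← Finset.sum_div, Finset.sum_neg_distrib, ← hB2]
    rcases eq_or_lt_of_le hBnn with h0 | h0
    · simp [← h0]
    · rw [pow_two, neg_div, mul_div_assoc, div_self (ne_of_gt h0), mul_one]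
  -- lower bound
  have hlb : ∀ y ∈ {y : ℝ | ∃ x : Fin n → ℝ, norm2 x ≤ 1 ∧
      y = (∑ i : Fin n, if (i:ℕ) < m then |x i| else x i) + dotp a x}, -B ≤ y := by
    rintro y ⟨z, hz, rfl⟩
    have hnz : 0 ≤ norm2 z := Real.sqrt_nonneg _
    have hCS : ∑ i, b i * |z i| ≤ B * norm2 z := by
      have := Real.sum_mul_le_sqrt_mul_sqrt Finset.univ b (fun i => |z i|)
      simpa [norm2, sq_abs, hB] using this
    have hCS' : ∑ i, b i * |z i| ≤ B := by
      calc ∑ i, b i * |z i| ≤ B * norm2 z := hCS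
        _ ≤ B * 1 := mul_le_mul_of_nonneg_left hz hBnn
        _ = B := mul_one B
    have hterm : ∀ i : Fin n,
        -(b i * |z i|) ≤ (if (i:ℕ) < m then |z i| else z i) + a i * z i := by
      intro i
      by_cases h : (i:ℕ) < m
      · simp only [h, if_pos]
        have h1 : |z i| + a i * z i ≥ |z i| - |a i| * |z i| := by
          have : a i * z i ≥ -(|a i| * |z i|) := by
            rw [← abs_mul]; exact neg_abs_le _
          linarith
        have h2 : -(b i) ≤ 1 - |a i| := by
          have : |a i| - 1 ≤ b i := by simp [hb, h, le_max_left]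
          linarith
        nlinarith [abs_nonneg (z i)]
      · simp only [h, if_neg, not_false_iff]
        have hbi : b i = |1 + a i| := by simp [hb, h]
        have : z i + a i * z i = (1 + a i) * z i := by ring
        rw [this, hbi, ← abs_mul]
        exact neg_abs_le _
    have : -(∑ i, b i * |z i|) ≤
        ∑ i : Fin n, ((if (i:ℕ) < m then |z i| else z i) + a i * z i) := by
      rw [← Finset.sum_neg_distrib]
      exact Finset.sum_le_sum fun i _ => hterm i
    have hsum : (∑ i : Fin n, if (i:ℕ) < m then |z i| else z i) + dotp a z
        = ∑ i : Fin n, ((if (i:ℕ) < m then |z i| else z i) + a i * z i) := by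
      rw [Finset.sum_add_distrib]; rfl
    rw [hsum]
    linarith
  apply le_antisymm
  · exact csInf_le ⟨-B, hlb⟩ ⟨x, hxnorm, hval.symm⟩
  · exact le_csInf ⟨_, ⟨x, hxnorm, rfl⟩⟩ hlb
end
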